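/- An array T with v^t rows and n columns over the alphabet Z_v is a VOA induced by the uniform matroid U_{t,n} (with level v) if and only if T is an orthogonal array OA(t, n, v) of index unity. -/
import Mathlib

/-- Key counting lemma: if `T` is an OA(t,n,v) of index unity, then for any set `A`
of at most `t` columns and any target `f`, the number of matching rows is
`v ^ (t - A.card)`. -/
lemma oa_count (n t v : ℕ) (ht : t ≤ n) (T : Fin (v ^ t) → Fin n → Fin v)
    (hOA : ∀ A : Finset (Fin n), A.card = t → ∀ f : Fin n → Fin v,
      (Finset.univ.filter (fun j => ∀ a ∈ A, T j a = f a)).card = 1) :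
    ∀ k (A : Finset (Fin n)) (f : Fin n → Fin v), A.card + k = t →
      (Finset.univ.filter (fun j => ∀ a ∈ A, T j a = f a)).card = v ^ k := by
  intro k
  induction k with
  | zero =>
    intro A f hA
    simpa using hOA A (by simpa using hA) f
  | succ k ih =>
    intro A f hA
    have hlt : A.card < n := by omega
    have hx : ∃ x : Fin n, x ∉ A := by
      by_contra h
      push_neg at h
      have : A = Finset.univ := Finset.eq_univ_of_forall h
      rw [this, Finset.card_univ, Fintype.card_fin] at hlt
      omega
    obtain ⟨x, hxA⟩ := hx
    have hpart :
        (Finset.univ.filter (fun j => ∀ a ∈ A, T j a = f a)).card =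
          ∑ c : Fin v, ((Finset.univ.filter (fun j => ∀ a ∈ A, T j a = f a)).filter
            (fun j => T j x = c)).card := by
      exact Finset.card_eq_sum_card_fiberwise (fun j _ => Finset.mem_univ (T j x))
    rw [hpart]
    have hterm : ∀ c : Fin v,
        ((Finset.univ.filter (fun j => ∀ a ∈ A, T j a = f a)).filter
          (fun j => T j x = c)).card = v ^ k := by
      intro c
      have heq :
          (Finset.univ.filter (fun j => ∀ a ∈ A, T j a = f a)).filter
            (fun j => T j x = c) =
          Finset.univ.filter
            (fun j => ∀ a ∈ insert x A, T j a = Function.update f x c a) := by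
        ext j
        simp only [Finset.mem_filter, Finset.mem_univ, true_and, Finset.mem_insert]
        constructor
        · rintro ⟨hA', hc⟩ a ha
          rcases ha with rfl | ha
          · simpa [Function.update_self] using hc
          · have hne : a ≠ x := fun h => hxA (h ▸ ha)
            rw [Function.update_of_ne hne]
            exact hA' a ha
        · intro h
          constructor
          · intro a ha
            have hne : a ≠ x := fun h' => hxA (h' ▸ ha)
            have := h a (Or.inr ha)
            rwa [Function.update_of_ne hne] at this
          · simpa [Function.update_self] using h x (Or.inl rfl)
      rw [heq]
      exact ih (insert x A) (Function.update f x c)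
        (by rw [Finset.card_insert_of_notMem hxA]; omega)
    simp only [hterm, Finset.sum_const, Finset.card_univ, Fintype.card_fin, smul_eq_mul]
    ring

theorem voa_uniform_iff_oa (n t v : ℕ) (ht : t ≤ n) (hv : 2 ≤ v)
    (T : Fin (v ^ t) → Fin n → Fin v) :
    (∀ A : Finset (Fin n), ∀ i,
      (Finset.univ.filter (fun j => ∀ a ∈ A, T j a = T i a)).card
        = v ^ (t - min t A.card))
    ↔
    (∀ A : Finset (Fin n), A.card = t → ∀ f : Fin n → Fin v,
      (Finset.univ.filter (fun j => ∀ a ∈ A, T j a = f a)).card = 1) := by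
  constructor
  · -- VOA → OA
    intro hVOA A hA f
    -- the restriction map is injective, hence bijective
    have hcount : ∀ i : Fin (v ^ t),
        (Finset.univ.filter (fun j => ∀ a ∈ A, T j a = T i a)).card = 1 := by
      intro i
      have := hVOA A i
      rw [hA, min_self, Nat.sub_self, pow_zero] at this
      exact this
    set φ : Fin (v ^ t) → ({ a // a ∈ A } → Fin v) := fun j a => T j a.1 with hφ
    have hinj : Function.Injective φ := by
      intro j j' hjj'
      have hj' : j' ∈ Finset.univ.filter (fun k => ∀ a ∈ A, T k a = T j a) := by
        simp only [Finset.mem_filter, Finset.mem_univ, true_and]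
        intro a ha
        exact congrFun hjj'.symm ⟨a, ha⟩
      have hj : j ∈ Finset.univ.filter (fun k => ∀ a ∈ A, T k a = T j a) := by
        simp
      obtain ⟨a, hsing⟩ := Finset.card_eq_one.mp (hcount j)
      rw [hsing, Finset.mem_singleton] at hj hj'
      rw [hj, hj']
    have hbij : Function.Bijective φ := by
      refine (Fintype.bijective_iff_injective_and_card φ).mpr ⟨hinj, ?_⟩
      simp [Fintype.card_fun, Fintype.card_coe, hA]
    obtain ⟨j, hj⟩ := hbij.surjective (fun a => f a.1)
    have heq : Finset.univ.filter (fun k => ∀ a ∈ A, T k a = f a) =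
        Finset.univ.filter (fun k => ∀ a ∈ A, T k a = T j a) := by
      apply Finset.filter_congr
      intro k _
      constructor <;> intro h a ha
      · rw [h a ha]; exact (congrFun hj ⟨a, ha⟩).symm
      · rw [h a ha]; exact congrFun hj ⟨a, ha⟩
    rw [heq]
    exact hcount j
  · -- OA → VOA
    intro hOA A i
    rcases le_or_gt A.card t with hle | hlt
    · rw [min_eq_right hle]
      exact oa_count n t v ht T hOA (t - A.card) A (T i) (by omega)
    · rw [min_eq_left (le_of_lt hlt), Nat.sub_self, pow_zero]
      obtain ⟨B, hBA, hB⟩ := Finset.exists_subset_card_eq (le_of_lt hlt) (s := A)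
      have h1 := hOA B hB (T i)
      obtain ⟨a, hsing⟩ := Finset.card_eq_one.mp h1
      have hsub : Finset.univ.filter (fun j => ∀ b ∈ A, T j b = T i b) ⊆
          Finset.univ.filter (fun j => ∀ b ∈ B, T j b = T i b) := by
        intro j hj
        simp only [Finset.mem_filter, Finset.mem_univ, true_and] at hj ⊢
        exact fun b hb => hj b (hBA hb)
      have hi : i ∈ Finset.univ.filter (fun j => ∀ b ∈ A, T j b = T i b) := by simp
      have hle1 : (Finset.univ.filter (fun j => ∀ b ∈ A, T j b = T i b)).card ≤ 1 := by
        calc (Finset.univ.filter (fun j => ∀ b ∈ A, T j b = T i b)).card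
            ≤ (Finset.univ.filter (fun j => ∀ b ∈ B, T j b = T i b)).card :=
              Finset.card_le_card hsub
          _ = 1 := h1
      have hge1 : 1 ≤ (Finset.univ.filter (fun j => ∀ b ∈ A, T j b = T i b)).card :=
        Finset.card_pos.mpr ⟨i, hi⟩
      omega
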